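/- Let M > 0, g ∈ ℝ^d, and H be a real symmetric d×d matrix, and suppose s ∈ ℝ^d is a global minimizer over ℝ^d of the cubic model u ↦ gᵀu + (1/2)uᵀHu + (M/6)‖u‖³. Then gᵀs + (1/2)sᵀHs + (M/6)‖s‖³ ≤ −(M/12)‖s‖³. -/
import Mathlib


open RealInnerProductSpace

/-- if `s` globally minimizes the cubic model
`u ↦ gᵀu + (1/2)uᵀHu + (M/6)‖u‖³`, then its model value satisfies
`gᵀs + (1/2)sᵀHs + (M/6)‖s‖³ ≤ −(M/12)‖s‖³`. -/
theorem stmt4 (d : ℕ) (M : ℝ) (hM : 0 < M) (g : EuclideanSpace ℝ (Fin d))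
    (H : Matrix (Fin d) (Fin d) ℝ) (hH : H.IsSymm)
    (s : EuclideanSpace ℝ (Fin d))
    (hmin : ∀ u : EuclideanSpace ℝ (Fin d),
      ⟪g, s⟫ + (1 / 2) * ⟪s, Matrix.toEuclideanLin H s⟫ + M / 6 * ‖s‖ ^ 3
        ≤ ⟪g, u⟫ + (1 / 2) * ⟪u, Matrix.toEuclideanLin H u⟫ + M / 6 * ‖u‖ ^ 3) :
    ⟪g, s⟫ + (1 / 2) * ⟪s, Matrix.toEuclideanLin H s⟫ + M / 6 * ‖s‖ ^ 3
      ≤ -(M / 12) * ‖s‖ ^ 3 := by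
  set a : ℝ := ⟪g, s⟫ with ha
  set b : ℝ := ⟪s, Matrix.toEuclideanLin H s⟫ with hb
  set c : ℝ := M / 6 * ‖s‖ ^ 3 with hc
  -- Step 1: test u = -s to get a ≤ 0
  have hneg : a ≤ 0 := by
    have h := hmin (-s)
    have h1 : ⟪g, -s⟫ = -a := by simp [ha]
    have h2 : ⟪-s, Matrix.toEuclideanLin H (-s)⟫ = b := by simp [hb]
    have h3 : ‖(-s : EuclideanSpace ℝ (Fin d))‖ = ‖s‖ := norm_neg s
    rw [h1, h2, h3] at h
    linarith
  -- Step 2: test u = t • s for t ∈ (0,1)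
  have hq : ∀ t : ℝ, t ∈ Set.Ioo (0:ℝ) 1 →
      a + (1 + t) * (b / 2) + (1 + t + t ^ 2) * c ≤ 0 := by
    intro t ht
    obtain ⟨ht0, ht1⟩ := ht
    have h := hmin (t • s)
    have h1 : ⟪g, t • s⟫ = t * a := real_inner_smul_right g s t
    have h2 : ⟪t • s, Matrix.toEuclideanLin H (t • s)⟫ = t * (t * b) := by
      rw [map_smul, real_inner_smul_left, real_inner_smul_right]
    have h3 : ‖t • s‖ ^ 3 = t ^ 3 * ‖s‖ ^ 3 := by
      rw [norm_smul, mul_pow, Real.norm_eq_abs, abs_of_pos ht0]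
    rw [h1, h2, h3] at h
    have h3' : M / 6 * (t ^ 3 * ‖s‖ ^ 3) = t ^ 3 * c := by rw [hc]; ring
    rw [h3'] at h
    have hfac : (1 - t) * (a + (1 + t) * (b / 2) + (1 + t + t ^ 2) * c) ≤ 0 := by
      nlinarith [h]
    have h1t : 0 < 1 - t := by linarith
    nlinarith [hfac, h1t]
  -- Step 3: take the limit t → 1⁻
  have hq1 : a + (1 + 1) * (b / 2) + (1 + 1 + 1 ^ 2) * c ≤ 0 := by
    have hcont : ContinuousAt (fun t : ℝ => a + (1 + t) * (b / 2) + (1 + t + t ^ 2) * c) 1 := by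
      fun_prop
    have hten : Filter.Tendsto (fun t : ℝ => a + (1 + t) * (b / 2) + (1 + t + t ^ 2) * c)
        (nhdsWithin 1 (Set.Iio 1)) (nhds (a + (1 + 1) * (b / 2) + (1 + 1 + 1 ^ 2) * c)) := by
      exact (hcont.tendsto).mono_left nhdsWithin_le_nhds
    refine le_of_tendsto hten ?_
    filter_upwards [Ioo_mem_nhdsLT_of_mem (by norm_num : (1:ℝ) ∈ Set.Ioc 0 1)] with t ht
    exact hq t ht
  -- Step 4: combine
  have : -(M / 12) * ‖s‖ ^ 3 = -(c / 2) := by rw [hc]; ring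
  rw [this]
  linarith
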